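/- The complete graph K_4 has rique-number 1, but admits neither a 1-page stack layout nor a 1-page queue layout. -/

import Mathlib

variable {V : Type*}

/-- The order `f` avoids the rique forbidden pattern P.1. -/
def RiqueFree (G : SimpleGraph V) (f : V → ℕ) : Prop :=
  ∀ a a' b b' c c', G.Adj a a' → G.Adj b b' → G.Adj c c' →
    ¬ (f a < f b ∧ f b < f c ∧ f c < f b' ∧ f b' < f a' ∧ f b' < f c')

/-- `G` has rique-number 1. -/
def HasOnePageRique (G : SimpleGraph V) : Prop :=
  ∃ f : V → ℕ, Function.Injective f ∧ RiqueFree G f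

/-- A 1-page stack layout: no two edges cross. -/
def StackFree (G : SimpleGraph V) (f : V → ℕ) : Prop :=
  ∀ a b c d, G.Adj a b → G.Adj c d → ¬ (f a < f c ∧ f c < f b ∧ f b < f d)

/-- A 1-page queue layout: no two edges nest. -/
def QueueFree (G : SimpleGraph V) (f : V → ℕ) : Prop :=
  ∀ a b c d, G.Adj a b → G.Adj c d → ¬ (f a < f c ∧ f c < f d ∧ f d < f b)

/-- `K_4` has rique-number 1, but admits neither a 1-page stack layout nor a
1-page queue layout. -/
theorem K4_rique_not_stack_not_queue :
    HasOnePageRique (SimpleGraph.completeGraph (Fin 4)) ∧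
    ¬ (∃ f : Fin 4 → ℕ, Function.Injective f ∧ StackFree (SimpleGraph.completeGraph (Fin 4)) f) ∧
    ¬ (∃ f : Fin 4 → ℕ, Function.Injective f ∧ QueueFree (SimpleGraph.completeGraph (Fin 4)) f) := by
  refine ⟨⟨fun v => v.val, fun a b h => Fin.ext h, ?_⟩, ?_, ?_⟩
  · intro a a' b b' c c' _ _ _ h
    simp only at h
    have := a'.isLt
    omega
  · rintro ⟨f, hf, hS⟩
    set σ := Tuple.sort f with hσ
    have hm : StrictMono (f ∘ σ) :=
      (Tuple.monotone_sort f).strictMono_of_injective (hf.comp σ.injective)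
    have hne : ∀ i j : Fin 4, i ≠ j → σ i ≠ σ j := fun i j h => fun e => h (σ.injective e)
    exact hS (σ 0) (σ 2) (σ 1) (σ 3) (hne 0 2 (by decide)) (hne 1 3 (by decide))
      ⟨hm (by decide), hm (by decide), hm (by decide)⟩
  · rintro ⟨f, hf, hQ⟩
    set σ := Tuple.sort f with hσ
    have hm : StrictMono (f ∘ σ) :=
      (Tuple.monotone_sort f).strictMono_of_injective (hf.comp σ.injective)
    have hne : ∀ i j : Fin 4, i ≠ j → σ i ≠ σ j := fun i j h => fun e => h (σ.injective e)
    exact hQ (σ 0) (σ 3) (σ 1) (σ 2) (hne 0 3 (by decide)) (hne 1 2 (by decide))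
      ⟨hm (by decide), hm (by decide), hm (by decide)⟩
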